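/- Let (a,b,c) be a triple of positive real numbers with a < b < c, ⌊c/b⌋ ≥ 2, b − a < c₀ < a, and 0 ≤ c₁ ≤ 2a − b, where c₀ := c − ⌊c/b⌋·b and c₁ := ⌊c/b⌋·b − ⌊(⌊c/b⌋·b)/a⌋·a. If S_{a,b,c} ≠ ∅ and either a/b ∉ ℚ, or a/b = p/q for coprime positive integers p, q and c ∈ (b/q)ℤ, then ((S_{a,b,c} ∩ ([0, c₀+a−b) + aℤ)) + ⌊c/b⌋b) ∪ ⋃_{k=0}^{⌊c/b⌋−1} (S_{a,b,c} + kb) = ℝ, where X + r := {x + r : x ∈ X}. -/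
import Mathlib

open MeasureTheory Set

/- Indicator function of the interval `[0, c)`. -/
open Classical in
noncomputable def chiIco (c x : ℝ) : ℝ := if 0 ≤ x ∧ x < c then 1 else 0

/-- The row `μ = j·a` of the infinite matrix `M_{a,b,c}(t)` applied to the vector
`z : bℤ → ℝ` (indexed by `k : ℤ`, with `λ = k·b`):
`(M_{a,b,c}(t)z)(μ) = Σ_{λ∈bℤ} χ_{[0,c)}(t − μ + λ)·z(λ)`. -/
noncomputable def Mrow (a b c t : ℝ) (z : ℤ → ℝ) (j : ℤ) : ℝ :=
  ∑' k : ℤ, chiIco c (t - (j : ℝ) * a + (k : ℝ) * b) * z k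

/-- `D_{a,b,c} = {t : M_{a,b,c}(t)x = 2 for some binary x with x(0) = 1}`. -/
def Dset (a b c : ℝ) : Set ℝ :=
  {t : ℝ | ∃ x : ℤ → ℝ, (∀ k, x k = 0 ∨ x k = 1) ∧ x 0 = 1 ∧ ∀ j : ℤ, Mrow a b c t x j = 2}

/-- `S_{a,b,c} = {t : M_{a,b,c}(t)x = 1 for some binary x with x(0) = 1}`. -/
def Sset (a b c : ℝ) : Set ℝ :=
  {t : ℝ | ∃ x : ℤ → ℝ, (∀ k, x k = 0 ∨ x k = 1) ∧ x 0 = 1 ∧ ∀ j : ℤ, Mrow a b c t x j = 1}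

/-- The periodic set `X + aℤ = {x + ka : x ∈ X, k ∈ ℤ}`. -/
def perSet (a : ℝ) (X : Set ℝ) : Set ℝ := {t : ℝ | ∃ k : ℤ, t - (k : ℝ) * a ∈ X}

open Filter

lemma Sset_mem_def {a b c t : ℝ} :
    t ∈ Sset a b c ↔ ∃ x : ℤ → ℝ, (∀ k, x k = 0 ∨ x k = 1) ∧ x 0 = 1 ∧
      ∀ j : ℤ, Mrow a b c t x j = 1 := Iff.rfl

lemma perSet_mem_def {a : ℝ} {X : Set ℝ} {t : ℝ} :
    t ∈ perSet a X ↔ ∃ k : ℤ, t - (k : ℝ) * a ∈ X := Iff.rfl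

lemma Mrow_def (a b c t : ℝ) (x : ℤ → ℝ) (j : ℤ) :
    Mrow a b c t x j = ∑' k : ℤ, chiIco c (t - (j : ℝ) * a + (k : ℝ) * b) * x k := rfl

lemma chiIco_eq_zero' {c v : ℝ} (h : ¬(0 ≤ v ∧ v < c)) : chiIco c v = 0 := if_neg h
lemma chiIco_eq_one_aux {c v : ℝ} (h : 0 ≤ v ∧ v < c) : chiIco c v = 1 := if_pos h

lemma chiIco_eq_one {c v : ℝ} (h : 0 ≤ v ∧ v < c) : chiIco c v = 1 := by
  unfold chiIco; rw [if_pos h]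

lemma chiIco_eq_zero {c v : ℝ} (h : ¬ (0 ≤ v ∧ v < c)) : chiIco c v = 0 := by
  unfold chiIco; rw [if_neg h]

lemma chiIco_nonneg (c v : ℝ) : 0 ≤ chiIco c v := by
  unfold chiIco; split <;> norm_num

lemma term_nonneg {x : ℤ → ℝ} (hx : ∀ k, x k = 0 ∨ x k = 1) (c v : ℝ) (k : ℤ) :
    0 ≤ chiIco c v * x k := by
  rcases hx k with h | h <;> rw [h] <;> simp [chiIco_nonneg]

/-- From a row equal to 1, extract an active index. -/
lemma row_exists {a b c t : ℝ} {x : ℤ → ℝ} (hx : ∀ k, x k = 0 ∨ x k = 1) {j : ℤ}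
    (h : Mrow a b c t x j = 1) :
    ∃ k : ℤ, x k = 1 ∧ 0 ≤ t - (j:ℝ) * a + (k:ℝ) * b ∧ t - (j:ℝ) * a + (k:ℝ) * b < c := by
  by_contra hno
  push_neg at hno
  have hzero : ∀ k : ℤ, chiIco c (t - (j:ℝ) * a + (k:ℝ) * b) * x k = 0 := by
    intro k
    rcases hx k with h0 | h1
    · rw [h0, mul_zero]
    · rw [chiIco_eq_zero (by rintro ⟨h0', hlt⟩; exact absurd hlt (not_lt.mpr (hno k h1 h0'))),
        zero_mul]
  have : Mrow a b c t x j = 0 := by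
    unfold Mrow
    rw [tsum_congr (fun k => hzero k)]
    exact tsum_zero
  rw [this] at h; norm_num at h

/-- Uniqueness of the active index in a row equal to 1. -/
lemma row_unique {a b c t : ℝ} {x : ℤ → ℝ} (hx : ∀ k, x k = 0 ∨ x k = 1) {j : ℤ}
    (h : Mrow a b c t x j = 1) {k₁ k₂ : ℤ}
    (h1 : x k₁ = 1 ∧ 0 ≤ t - (j:ℝ) * a + (k₁:ℝ) * b ∧ t - (j:ℝ) * a + (k₁:ℝ) * b < c)
    (h2 : x k₂ = 1 ∧ 0 ≤ t - (j:ℝ) * a + (k₂:ℝ) * b ∧ t - (j:ℝ) * a + (k₂:ℝ) * b < c) :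
    k₁ = k₂ := by
  by_contra hne
  set f : ℤ → ℝ := fun k => chiIco c (t - (j:ℝ) * a + (k:ℝ) * b) * x k with hf
  have hfnn : ∀ k, 0 ≤ f k := fun k => term_nonneg hx _ _ k
  have hf1 : f k₁ = 1 := by simp [hf, chiIco_eq_one ⟨h1.2.1, h1.2.2⟩, h1.1]
  have hf2 : f k₂ = 1 := by simp [hf, chiIco_eq_one ⟨h2.2.1, h2.2.2⟩, h2.1]
  by_cases hs : Summable f
  · have hsum : (∑ k ∈ ({k₁, k₂} : Finset ℤ), f k) ≤ ∑' k, f k :=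
      Summable.sum_le_tsum _ (fun i _ => hfnn i) hs
    rw [Finset.sum_pair hne, hf1, hf2] at hsum
    have : Mrow a b c t x j = ∑' k, f k := rfl
    rw [this.symm] at hsum
    rw [h] at hsum; norm_num at hsum
  · have : Mrow a b c t x j = 0 := tsum_eq_zero_of_not_summable hs
    rw [this] at h; norm_num at h

/-- Shifting `t` by `κ b` and reindexing the witness. -/
lemma Sset_translate_b {a b c t : ℝ} {x : ℤ → ℝ} (hx : ∀ k, x k = 0 ∨ x k = 1)
    (hrow : ∀ j : ℤ, Mrow a b c t x j = 1) {κ : ℤ} (hκ : x κ = 1) :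
    t + (κ:ℝ) * b ∈ Sset a b c := by
  refine ⟨fun k => x (k + κ), fun k => hx _, by simpa using hκ, fun j => ?_⟩
  have : Mrow a b c (t + (κ:ℝ)*b) (fun k => x (k + κ)) j = Mrow a b c t x j := by
    unfold Mrow
    have := Equiv.tsum_eq (Equiv.addRight κ)
      (fun k : ℤ => chiIco c (t - (j:ℝ) * a + (k:ℝ) * b) * x k)
    rw [← this]
    apply tsum_congr
    intro k
    have harg : t + (κ:ℝ)*b - (j:ℝ)*a + (k:ℝ)*b = t - (j:ℝ)*a + (((k + κ : ℤ)):ℝ)*b := by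
      push_cast; ring
    simp only [Equiv.coe_addRight, harg]
  rw [this]; exact hrow j

/-- `S` is invariant under translation by `l·a`. -/
lemma Sset_add_int_a {a b c t : ℝ} (ht : t ∈ Sset a b c) (l : ℤ) :
    t + (l:ℝ) * a ∈ Sset a b c := by
  obtain ⟨x, hx, hx0, hrow⟩ := ht
  refine ⟨x, hx, hx0, fun j => ?_⟩
  have : Mrow a b c (t + (l:ℝ)*a) x j = Mrow a b c t x (j - l) := by
    unfold Mrow
    apply tsum_congr
    intro k
    have : t + (l:ℝ)*a - (j:ℝ)*a + (k:ℝ)*b = t - (((j - l : ℤ)):ℝ)*a + (k:ℝ)*b := by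
      push_cast; ring
    rw [this]
  rw [this]; exact hrow (j - l)

lemma perSet_add_int_a {a w t : ℝ} (ht : t ∈ perSet a (Set.Ico 0 w)) (l : ℤ) :
    t + (l:ℝ) * a ∈ perSet a (Set.Ico 0 w) := by
  obtain ⟨k, hk⟩ := ht
  refine ⟨k + l, ?_⟩
  have harg : t + (l:ℝ) * a - ((k + l : ℤ):ℝ) * a = t - (k:ℝ) * a := by push_cast; ring
  rw [harg]; exact hk


/-- The token lemma: every `t + m·b` lies in some `S + k·b` with `k ≤ ⌊c/b⌋`, and in the
case `k = ⌊c/b⌋` additionally `t + m·b − k·b ∈ [0, c₀+a−b) + aℤ`. -/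
theorem token {a b c t : ℝ} (ha : 0 < a) (hab : a < b) (hbc : b < c)
    (ht : t ∈ Sset a b c) (m : ℤ) :
    ∃ k : ℕ, (k:ℤ) ≤ ⌊c/b⌋ ∧ t + (m:ℝ) * b - (k:ℝ) * b ∈ Sset a b c ∧
      ((k:ℤ) = ⌊c/b⌋ →
        t + (m:ℝ) * b - (k:ℝ) * b ∈ perSet a (Set.Ico 0 ((c - (⌊c/b⌋:ℝ)*b) + a - b))) := by
  obtain ⟨x, hx, hx0, hrow⟩ := Sset_mem_def.mp ht
  have hb : 0 < b := lt_trans ha hab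
  set L : ℤ := ⌊c/b⌋ with hL
  have hLb : (L:ℝ) * b ≤ c := by
    have := Int.floor_le (c/b)
    calc (L:ℝ) * b ≤ (c/b) * b := by
          apply mul_le_mul_of_nonneg_right this (le_of_lt hb)
      _ = c := by field_simp
  have hcLb : c < ((L:ℝ) + 1) * b := by
    have := Int.lt_floor_add_one (c/b)
    have h2 : c / b < (L:ℝ) + 1 := by exact_mod_cast this
    calc c = (c/b) * b := by field_simp
      _ < ((L:ℝ) + 1) * b := by apply mul_lt_mul_of_pos_right h2 hb
  -- Step 1: there is an element of P with k ≤ m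
  have step1 : ∃ k : ℤ, x k = 1 ∧ k ≤ m := by
    set j₀ : ℤ := ⌊(t - c + (m:ℝ)*b)/a⌋ with hj₀
    have hj0le : (j₀:ℝ) * a ≤ t - c + (m:ℝ)*b := by
      have := Int.floor_le ((t - c + (m:ℝ)*b)/a)
      calc (j₀:ℝ) * a ≤ ((t - c + (m:ℝ)*b)/a) * a :=
            mul_le_mul_of_nonneg_right this (le_of_lt ha)
        _ = t - c + (m:ℝ)*b := by field_simp
    obtain ⟨k, hk1, hkin⟩ := row_exists hx (hrow j₀)
    refine ⟨k, hk1, ?_⟩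
    have : (k:ℝ) * b < (m:ℝ) * b := by nlinarith [hkin.2]
    have : (k:ℝ) < (m:ℝ) := lt_of_mul_lt_mul_right this (le_of_lt hb)
    exact_mod_cast le_of_lt this
  -- Step 2: κ = greatest element of P with κ ≤ m
  obtain ⟨κ, ⟨hκ1, hκm⟩, hκmax⟩ :=
    Int.exists_greatest_of_bdd (P := fun z => x z = 1 ∧ z ≤ m) ⟨m, fun z hz => hz.2⟩ step1
  -- Step 3: some element of P is > κ
  have step3 : ∃ k : ℤ, x k = 1 ∧ κ < k := by
    set j₁ : ℤ := ⌊(t + (κ:ℝ)*b)/a⌋ + 1 with hj₁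
    have hj1gt : t + (κ:ℝ)*b < (j₁:ℝ) * a := by
      have := Int.lt_floor_add_one ((t + (κ:ℝ)*b)/a)
      have h2 : (t + (κ:ℝ)*b)/a < (j₁:ℝ) := by push_cast; exact_mod_cast this
      calc t + (κ:ℝ)*b = ((t + (κ:ℝ)*b)/a) * a := by field_simp
        _ < (j₁:ℝ) * a := mul_lt_mul_of_pos_right h2 ha
    obtain ⟨k, hk1, hkin⟩ := row_exists hx (hrow j₁)
    refine ⟨k, hk1, ?_⟩
    have : (κ:ℝ) * b < (k:ℝ) * b := by nlinarith [hkin.1]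
    have : (κ:ℝ) < (k:ℝ) := lt_of_mul_lt_mul_right this (le_of_lt hb)
    exact_mod_cast this
  -- κ⁺ = least element of P above κ
  obtain ⟨κp, ⟨hκp1, hκκp⟩, hκpmin⟩ :=
    Int.exists_least_of_bdd (P := fun z => x z = 1 ∧ κ < z) ⟨κ + 1, fun z hz => hz.2⟩ step3
  have hmκp : m < κp := by
    by_contra hcon
    push_neg at hcon
    exact absurd (hκmax κp ⟨hκp1, hcon⟩) (not_le.mpr hκκp)
  -- gap bound: κp − κ ≤ L + 1
  have hgap : κp - κ ≤ L + 1 := by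
    by_contra hcon
    push_neg at hcon
    have hgapge : (L:ℝ) + 2 ≤ ((κp:ℝ) - (κ:ℝ)) := by
      have h' : L + 2 ≤ κp - κ := by omega
      exact_mod_cast h'
    set j₂ : ℤ := ⌊(t + (κ:ℝ)*b)/a⌋ + 1 with hj₂
    have hj2gt : t + (κ:ℝ)*b < (j₂:ℝ) * a := by
      have := Int.lt_floor_add_one ((t + (κ:ℝ)*b)/a)
      have h2 : (t + (κ:ℝ)*b)/a < (j₂:ℝ) := by push_cast; exact_mod_cast this
      calc t + (κ:ℝ)*b = ((t + (κ:ℝ)*b)/a) * a := by field_simp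
        _ < (j₂:ℝ) * a := mul_lt_mul_of_pos_right h2 ha
    have hj2le : (j₂:ℝ) * a ≤ t + (κ:ℝ)*b + a := by
      have := Int.floor_le ((t + (κ:ℝ)*b)/a)
      have h2 : (⌊(t + (κ:ℝ)*b)/a⌋ : ℝ) * a ≤ t + (κ:ℝ)*b := by
        calc (⌊(t + (κ:ℝ)*b)/a⌋ : ℝ) * a ≤ ((t + (κ:ℝ)*b)/a) * a :=
              mul_le_mul_of_nonneg_right this (le_of_lt ha)
          _ = t + (κ:ℝ)*b := by field_simp
      have hj2cast : (j₂:ℝ) = (⌊(t + (κ:ℝ)*b)/a⌋ : ℝ) + 1 := by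
        rw [hj₂]; push_cast; ring
      rw [hj2cast]; nlinarith
    obtain ⟨k, hk1, hkin⟩ := row_exists hx (hrow j₂)
    have hkgt : κ < k := by
      have : (κ:ℝ) * b < (k:ℝ) * b := by nlinarith [hkin.1]
      exact_mod_cast lt_of_mul_lt_mul_right this (le_of_lt hb)
    have hklt : k < κp := by
      have hkb : (k:ℝ) * b < (κp:ℝ) * b := by nlinarith [hkin.2]
      exact_mod_cast lt_of_mul_lt_mul_right hkb (le_of_lt hb)
    exact absurd (hκpmin k ⟨hk1, hkgt⟩) (not_le.mpr hklt)
  -- the token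
  have hκle : κ ≤ m := hκm
  refine ⟨(m - κ).toNat, ?_, ?_, ?_⟩
  · have h1 : ((m - κ).toNat : ℤ) = m - κ := Int.toNat_of_nonneg (by omega)
    omega
  · have h1 : (((m - κ).toNat : ℕ) : ℝ) = (m:ℝ) - (κ:ℝ) := by
      have : ((m - κ).toNat : ℤ) = m - κ := Int.toNat_of_nonneg (by omega)
      push_cast [this]
      exact_mod_cast congrArg (Int.cast : ℤ → ℝ) this
    have harg : t + (m:ℝ) * b - (((m - κ).toNat : ℕ) : ℝ) * b = t + (κ:ℝ) * b := by
      rw [h1]; ring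
    rw [harg]
    exact Sset_translate_b hx hrow hκ1
  · intro hkL
    have hmκL : m - κ = L := by
      have : ((m - κ).toNat : ℤ) = m - κ := Int.toNat_of_nonneg (by omega)
      omega
    have hκpeq : κp = κ + L + 1 := by omega
    have h1 : (((m - κ).toNat : ℕ) : ℝ) = (m:ℝ) - (κ:ℝ) := by
      have : ((m - κ).toNat : ℤ) = m - κ := Int.toNat_of_nonneg (by omega)
      exact_mod_cast congrArg (Int.cast : ℤ → ℝ) this
    have harg : t + (m:ℝ) * b - (((m - κ).toNat : ℕ) : ℝ) * b = t + (κ:ℝ) * b := by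
      rw [h1]; ring
    rw [harg]
    set u : ℝ := t + (κ:ℝ) * b with hu
    set l : ℤ := ⌊u/a⌋ with hl
    have hla : (l:ℝ) * a ≤ u := by
      have := Int.floor_le (u/a)
      calc (l:ℝ) * a ≤ (u/a) * a := mul_le_mul_of_nonneg_right this (le_of_lt ha)
        _ = u := by field_simp
    have hule : u - (l:ℝ)*a < (c - (L:ℝ)*b) + a - b := by
      by_contra hcon
      push_neg at hcon
      set j₃ : ℤ := l + 1 with hj₃
      have hs1 : u < (j₃:ℝ) * a := by
        have := Int.lt_floor_add_one (u/a)
        have h2 : u/a < (j₃:ℝ) := by push_cast; exact_mod_cast this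
        calc u = (u/a) * a := by field_simp
          _ < (j₃:ℝ) * a := mul_lt_mul_of_pos_right h2 ha
      have hs2 : (j₃:ℝ) * a ≤ u + ((L:ℝ) + 1) * b - c := by
        have hj3cast : (j₃:ℝ) * a = (l:ℝ)*a + a := by
          rw [hj₃]; push_cast; ring
        rw [hj3cast]; nlinarith
      obtain ⟨k, hk1, hkin⟩ := row_exists hx (hrow j₃)
      have hkgt : κ < k := by
        have : (κ:ℝ) * b < (k:ℝ) * b := by nlinarith [hkin.1]
        exact_mod_cast lt_of_mul_lt_mul_right this (le_of_lt hb)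
      have hklt : k < κp := by
        have hkb : (k:ℝ) * b < (κp:ℝ) * b := by
          have hκpr : (κp:ℝ) = (κ:ℝ) + (L:ℝ) + 1 := by exact_mod_cast congrArg (Int.cast : ℤ → ℝ) hκpeq
          nlinarith [hkin.2]
        exact_mod_cast lt_of_mul_lt_mul_right hkb (le_of_lt hb)
      exact absurd (hκpmin k ⟨hk1, hkgt⟩) (not_le.mpr hklt)
    exact perSet_mem_def.mpr ⟨l, ⟨by linarith, hule⟩⟩


lemma chiIco_congr {c v v' : ℝ} (h : (0 ≤ v ∧ v < c) ↔ (0 ≤ v' ∧ v' < c)) :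
    chiIco c v = chiIco c v' := by
  unfold chiIco
  by_cases hv : 0 ≤ v ∧ v < c
  · rw [if_pos hv, if_pos (h.mp hv)]
  · rw [if_neg hv, if_neg (fun hv' => hv (h.mpr hv'))]

/-- Membership of `t + s·δ` in `[0, N·δ)` only depends on `⌊t/δ⌋`. -/
lemma cell_window {δ : ℝ} (hδ : 0 < δ) (t : ℝ) (s N : ℤ) :
    (0 ≤ t + (s:ℝ)*δ ∧ t + (s:ℝ)*δ < (N:ℝ)*δ) ↔ (0 ≤ ⌊t/δ⌋ + s ∧ ⌊t/δ⌋ + s < N) := by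
  have hfl : ⌊(t + (s:ℝ)*δ)/δ⌋ = ⌊t/δ⌋ + s := by
    rw [show (t + (s:ℝ)*δ)/δ = t/δ + (s:ℝ) by field_simp, Int.floor_add_intCast]
  constructor
  · rintro ⟨h0, h1⟩
    constructor
    · rw [← hfl]; exact Int.floor_nonneg.mpr (div_nonneg h0 (le_of_lt hδ))
    · rw [← hfl]; exact Int.floor_lt.mpr (by rw [div_lt_iff₀ hδ]; linarith)
  · rintro ⟨h0, h1⟩
    constructor
    · have h' := Int.floor_nonneg.mp (hfl ▸ h0)
      have h'' := mul_nonneg h' (le_of_lt hδ)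
      rwa [div_mul_cancel₀ _ (ne_of_gt hδ)] at h''
    · have := Int.floor_lt.mp (hfl ▸ h1)
      rw [div_lt_iff₀ hδ] at this
      linarith
  
/-- Cell transfer for `S` in the rational case. -/
lemma cell_transfer_S {a b c δ : ℝ} (hδ : 0 < δ) (p q N : ℤ)
    (hA : a = (p:ℝ)*δ) (hB : b = (q:ℝ)*δ) (hC : c = (N:ℝ)*δ)
    {t t' : ℝ} (hcell : ⌊t/δ⌋ = ⌊t'/δ⌋) (ht : t ∈ Sset a b c) : t' ∈ Sset a b c := by
  obtain ⟨x, hx, hx0, hrow⟩ := Sset_mem_def.mp ht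
  refine Sset_mem_def.mpr ⟨x, hx, hx0, fun j => ?_⟩
  rw [Mrow_def, ← hrow j, Mrow_def]
  apply tsum_congr
  intro k
  congr 1
  have harg : ∀ u : ℝ, u - (j:ℝ)*a + (k:ℝ)*b = u + ((k*q - j*p : ℤ):ℝ)*δ := by
    intro u; rw [hA, hB]; push_cast; ring
  rw [harg t, harg t']
  apply chiIco_congr
  rw [hC, cell_window hδ t _ N, cell_window hδ t' _ N, hcell]

/-- Cell transfer for `perSet a (Ico 0 w)` in the rational case. -/
lemma cell_transfer_per {a w δ : ℝ} (hδ : 0 < δ) (p W : ℤ)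
    (hA : a = (p:ℝ)*δ) (hW : w = (W:ℝ)*δ)
    {t t' : ℝ} (hcell : ⌊t/δ⌋ = ⌊t'/δ⌋) (ht : t ∈ perSet a (Set.Ico 0 w)) :
    t' ∈ perSet a (Set.Ico 0 w) := by
  obtain ⟨l, hl⟩ := perSet_mem_def.mp ht
  refine perSet_mem_def.mpr ⟨l, ?_⟩
  have harg : ∀ u : ℝ, u - (l:ℝ)*a = u + ((-(l*p) : ℤ):ℝ)*δ := by
    intro u; rw [hA]; push_cast; ring
  have h1 : 0 ≤ t + ((-(l*p) : ℤ):ℝ)*δ ∧ t + ((-(l*p) : ℤ):ℝ)*δ < (W:ℝ)*δ := by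
    rw [← harg t]
    exact ⟨hl.1, by rw [← hW]; exact hl.2⟩
  rw [cell_window hδ t _ W, hcell, ← cell_window hδ t' _ W] at h1
  rw [harg t']
  exact ⟨h1.1, by rw [hW]; exact h1.2⟩


/-- Density of `{m·b + l·a}` when `a/b` is irrational. -/
lemma dense_ab {a b : ℝ} (ha : 0 < a) (hb : 0 < b) (hirr : Irrational (a / b)) :
    Dense {x : ℝ | ∃ m l : ℤ, x = (m:ℝ) * b + (l:ℝ) * a} := by
  rcases AddSubgroup.dense_or_cyclic (AddSubgroup.closure {b, a}) with hd | ⟨g, hg⟩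
  · apply Dense.mono ?_ hd
    intro x hx
    obtain ⟨m, l, hml⟩ := AddSubgroup.mem_closure_pair.mp hx
    exact ⟨m, l, by rw [← hml]; push_cast [zsmul_eq_mul]; ring⟩
  · exfalso
    have hbmem : b ∈ AddSubgroup.closure ({b, a} : Set ℝ) :=
      AddSubgroup.subset_closure (by simp)
    have hamem : a ∈ AddSubgroup.closure ({b, a} : Set ℝ) :=
      AddSubgroup.subset_closure (by simp)
    rw [hg] at hbmem hamem
    obtain ⟨n, hn⟩ := AddSubgroup.mem_closure_singleton.mp hbmem
    obtain ⟨m, hm⟩ := AddSubgroup.mem_closure_singleton.mp hamem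
    have hg0 : g ≠ 0 := by
      intro h0
      rw [h0] at hn
      simp [zsmul_eq_mul] at hn
      exact absurd hn.symm (ne_of_gt hb)
    have hn0 : (n:ℝ) ≠ 0 := by
      intro h0
      rw [zsmul_eq_mul] at hn
      rw [h0] at hn
      simp at hn
      exact absurd hn.symm (ne_of_gt hb)
    apply hirr
    refine ⟨(m : ℚ) / (n : ℚ), ?_⟩
    rw [zsmul_eq_mul] at hn hm
    push_cast
    rw [← hm, ← hn]
    rw [mul_div_mul_right _ _ hg0]

/-- Ultrafilter pigeonhole on a bounded integer-valued function. -/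
lemma ultra_fiber (U : Ultrafilter ℕ) (f : ℕ → ℤ) (lo hi : ℤ)
    (hbd : {n | lo ≤ f n ∧ f n ≤ hi} ∈ U) : ∃ z : ℤ, {n | f n = z} ∈ U := by
  by_contra hno
  push_neg at hno
  have hcompl : ∀ z : ℤ, {n | f n ≠ z} ∈ U := by
    intro z
    have := hno z
    rwa [← Ultrafilter.compl_mem_iff_notMem] at this
  have hint : (⋂ z ∈ Finset.Icc lo hi, {n | f n ≠ z}) ∈ U :=
    (Filter.biInter_mem (Finset.Icc lo hi).finite_toSet).mpr (fun z _ => hcompl z)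
  have hmem := Filter.inter_mem hbd hint
  obtain ⟨n, hn1, hn2⟩ := Ultrafilter.nonempty_of_mem hmem
  simp only [Set.mem_iInter] at hn2
  exact hn2 (f n) (Finset.mem_Icc.mpr ⟨hn1.1, hn1.2⟩) rfl

lemma tendsto_aux {sstar : ℝ} {s : ℕ → ℝ} (hgt : ∀ n, sstar < s n)
    (hlt : ∀ n, s n < sstar + 1/((n:ℝ)+1)) : Tendsto s atTop (nhds sstar) := by
  have h1 : Tendsto (fun n : ℕ => sstar + 1/((n:ℝ)+1)) atTop (nhds (sstar + 0)) :=
    tendsto_const_nhds.add tendsto_one_div_add_atTop_nhds_zero_nat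
  rw [add_zero] at h1
  exact tendsto_of_tendsto_of_tendsto_of_le_of_le tendsto_const_nhds h1
    (fun n => le_of_lt (hgt n)) (fun n => le_of_lt (hlt n))

/-- S-membership passes to decreasing limits (along the hyperfilter). -/
lemma limit_S {a b c : ℝ} (hb : 0 < b) {sstar : ℝ} {s : ℕ → ℝ}
    (hmem : {n | s n ∈ Sset a b c} ∈ Filter.hyperfilter ℕ)
    (hgt : ∀ n, sstar < s n) (hlt : ∀ n, s n < sstar + 1/((n:ℝ)+1)) :
    sstar ∈ Sset a b c := by
  classical
  set U := Filter.hyperfilter ℕ with hU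
  set xw : ℕ → ℤ → ℝ := fun n =>
    if h : s n ∈ Sset a b c then (Sset_mem_def.mp h).choose else fun _ => 0 with hxw
  have hxwspec : ∀ n, s n ∈ Sset a b c →
      (∀ k, xw n k = 0 ∨ xw n k = 1) ∧ xw n 0 = 1 ∧ ∀ j : ℤ, Mrow a b c (s n) (xw n) j = 1 := by
    intro n h
    have := (Sset_mem_def.mp h).choose_spec
    simpa [hxw, dif_pos h] using this
  have hxwbin : ∀ n k, xw n k = 0 ∨ xw n k = 1 := by
    intro n k
    by_cases h : s n ∈ Sset a b c
    · exact (hxwspec n h).1 k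
    · left; simp [hxw, dif_neg h]
  set xstar : ℤ → ℝ := fun k => if {n | xw n k = 1} ∈ U then 1 else 0 with hxstar
  have hxsbin : ∀ k, xstar k = 0 ∨ xstar k = 1 := by
    intro k; by_cases h : {n | xw n k = 1} ∈ U <;> simp [hxstar, h]
  have hagree : ∀ k : ℤ, {n | xw n k = xstar k} ∈ U := by
    intro k
    by_cases h : {n | xw n k = 1} ∈ U
    · have : xstar k = 1 := by simp [hxstar, h]
      rw [this]; exact h
    · have hx0 : xstar k = 0 := by simp [hxstar, h]
      rw [hx0]
      have hcomp : {n | xw n k = 1}ᶜ ∈ U := Ultrafilter.compl_mem_iff_notMem.mpr h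
      apply Filter.mem_of_superset hcomp
      intro n hn
      simp only [Set.mem_compl_iff, Set.mem_setOf_eq] at hn ⊢
      rcases hxwbin n k with h0 | h1
      · exact h0
      · exact absurd h1 hn
  have htend : Tendsto s atTop (nhds sstar) := tendsto_aux hgt hlt
  refine Sset_mem_def.mpr ⟨xstar, hxsbin, ?_, ?_⟩
  · have h01 : {n | xw n 0 = 1} ∈ U := by
      apply Filter.mem_of_superset hmem
      intro n hn
      exact (hxwspec n hn).2.1
    simp [hxstar, h01]
  · intro j
    set K : Finset ℤ :=
      Finset.Icc ⌈((j:ℝ)*a - sstar - 1)/b⌉ ⌊((j:ℝ)*a - sstar + c)/b⌋ with hK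
    have hKout : ∀ k : ℤ, k ∉ K → ∀ σ : ℝ, sstar ≤ σ → σ ≤ sstar + 1 →
        ¬(0 ≤ σ - (j:ℝ)*a + (k:ℝ)*b ∧ σ - (j:ℝ)*a + (k:ℝ)*b < c) := by
      intro k hk σ h1 h2 hcond
      rw [hK, Finset.mem_Icc] at hk
      push_neg at hk
      by_cases hlo : ⌈((j:ℝ)*a - sstar - 1)/b⌉ ≤ k
      · have hhi := hk hlo
        rw [Int.floor_lt] at hhi
        rw [div_lt_iff₀ hb] at hhi
        nlinarith [hcond.1, hcond.2]
      · push_neg at hlo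
        rw [Int.lt_ceil] at hlo
        rw [lt_div_iff₀ hb] at hlo
        nlinarith [hcond.1, hcond.2]
    have hA2 : ∀ k : ℤ, {n | chiIco c (s n - (j:ℝ)*a + (k:ℝ)*b)
        = chiIco c (sstar - (j:ℝ)*a + (k:ℝ)*b)} ∈ U := by
      intro k
      set v : ℝ := sstar - (j:ℝ)*a + (k:ℝ)*b with hv
      have htd : Tendsto (fun n => s n - (j:ℝ)*a + (k:ℝ)*b) atTop (nhds v) := by
        have := (htend.sub_const ((j:ℝ)*a)).add_const ((k:ℝ)*b)
        simpa using this
      have hev : ∀ᶠ n in atTop, chiIco c (s n - (j:ℝ)*a + (k:ℝ)*b) = chiIco c v := by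
        by_cases hv0 : 0 ≤ v
        · by_cases hvc : v < c
          · have hevc : ∀ᶠ n in atTop, s n - (j:ℝ)*a + (k:ℝ)*b < c :=
              htd.eventually_lt_const hvc
            filter_upwards [hevc] with n hn
            rw [chiIco_eq_one_aux ⟨by nlinarith [hgt n], hn⟩, chiIco_eq_one_aux ⟨hv0, hvc⟩]
          · apply Filter.Eventually.of_forall
            intro n
            push_neg at hvc
            rw [chiIco_eq_zero' (by rintro ⟨_, hc2⟩; nlinarith [hgt n]),
              chiIco_eq_zero' (by rintro ⟨_, hc2⟩; nlinarith)]
        · push_neg at hv0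
          have hevc : ∀ᶠ n in atTop, s n - (j:ℝ)*a + (k:ℝ)*b < 0 :=
            htd.eventually_lt_const hv0
          filter_upwards [hevc] with n hn
          rw [chiIco_eq_zero' (by rintro ⟨hc1, _⟩; linarith),
            chiIco_eq_zero' (by rintro ⟨hc1, _⟩; linarith)]
      apply Filter.hyperfilter_le_cofinite
      rwa [Nat.cofinite_eq_atTop]
    have hsets : ({n | s n ∈ Sset a b c} ∩
        ⋂ k ∈ (K : Set ℤ), ({n | xw n k = xstar k} ∩
          {n | chiIco c (s n - (j:ℝ)*a + (k:ℝ)*b) = chiIco c (sstar - (j:ℝ)*a + (k:ℝ)*b)})) ∈ U :=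
      Filter.inter_mem hmem ((Filter.biInter_mem K.finite_toSet).mpr
        (fun k _ => Filter.inter_mem (hagree k) (hA2 k)))
    obtain ⟨n, hn1, hn2⟩ := Ultrafilter.nonempty_of_mem hsets
    simp only [Set.mem_iInter, Set.mem_inter_iff, Set.mem_setOf_eq] at hn2
    have hsn1 : s n ≤ sstar + 1 := by
      have h1 : 1/((n:ℝ)+1) ≤ 1 := by
        rw [div_le_one (by positivity)]
        have : (0:ℝ) ≤ (n:ℝ) := Nat.cast_nonneg n
        linarith
      have := hlt n
      linarith
    have heq : Mrow a b c sstar xstar j = Mrow a b c (s n) (xw n) j := by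
      rw [Mrow_def, Mrow_def]
      apply tsum_congr
      intro k
      by_cases hkK : k ∈ K
      · obtain ⟨hag, hchi⟩ := hn2 k (by exact_mod_cast hkK)
        rw [← hchi, ← hag]
      · rw [chiIco_eq_zero' (hKout k hkK sstar le_rfl (by linarith)),
          chiIco_eq_zero' (hKout k hkK (s n) (le_of_lt (hgt n)) hsn1),
          zero_mul, zero_mul]
    rw [heq]
    exact (hxwspec n hn1).2.2 j

/-- perSet-membership passes to decreasing limits (along the hyperfilter). -/
lemma limit_per {a w : ℝ} (ha : 0 < a) {sstar : ℝ} {s : ℕ → ℝ}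
    (hmem : {n | s n ∈ perSet a (Set.Ico 0 w)} ∈ Filter.hyperfilter ℕ)
    (hgt : ∀ n, sstar < s n) (hlt : ∀ n, s n < sstar + 1/((n:ℝ)+1)) :
    sstar ∈ perSet a (Set.Ico 0 w) := by
  classical
  set U := Filter.hyperfilter ℕ with hU
  set lw : ℕ → ℤ := fun n =>
    if h : s n ∈ perSet a (Set.Ico 0 w) then (perSet_mem_def.mp h).choose else 0 with hlw
  have hlwspec : ∀ n, s n ∈ perSet a (Set.Ico 0 w) →
      0 ≤ s n - (lw n : ℝ) * a ∧ s n - (lw n : ℝ) * a < w := by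
    intro n h
    have := (perSet_mem_def.mp h).choose_spec
    rw [hlw]
    simpa [dif_pos h] using this
  have hsn1 : ∀ n, s n ≤ sstar + 1 := by
    intro n
    have h1 : 1/((n:ℝ)+1) ≤ 1 := by
      rw [div_le_one (by positivity)]
      have : (0:ℝ) ≤ (n:ℝ) := Nat.cast_nonneg n
      linarith
    have := hlt n
    linarith
  have hbd : {n | ⌊(sstar - w)/a⌋ + 1 ≤ lw n ∧ lw n ≤ ⌊(sstar + 1)/a⌋} ∈ U := by
    apply Filter.mem_of_superset hmem
    intro n hn
    obtain ⟨h0, h1⟩ := hlwspec n hn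
    constructor
    · have hq : (sstar - w)/a < ((lw n : ℤ) : ℝ) := by
        rw [div_lt_iff₀ ha]
        have := hgt n
        nlinarith
      have := Int.floor_lt.mpr hq
      omega
    · rw [Int.le_floor, le_div_iff₀ ha]
      have := hsn1 n
      nlinarith
  obtain ⟨l₀, hl₀⟩ := ultra_fiber U lw _ _ hbd
  have hboth := Filter.inter_mem hmem hl₀
  obtain ⟨n₀, hn₀mem, hn₀l⟩ := Ultrafilter.nonempty_of_mem hboth
  have hn₀l' : lw n₀ = l₀ := hn₀l
  refine perSet_mem_def.mpr ⟨l₀, ?_, ?_⟩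
  · -- 0 ≤ sstar - l₀ a
    by_contra hneg
    push_neg at hneg
    obtain ⟨N, hN⟩ := exists_nat_one_div_lt (show (0:ℝ) < (l₀:ℝ)*a - sstar by linarith)
    have hlarge : {n | N ≤ n} ∈ U := by
      apply Filter.hyperfilter_le_cofinite
      rw [Nat.cofinite_eq_atTop]
      exact Filter.eventually_ge_atTop N
    obtain ⟨n, ⟨hnmem, hnl⟩, hnN⟩ :=
      Ultrafilter.nonempty_of_mem (Filter.inter_mem hboth hlarge)
    have hnl' : lw n = l₀ := hnl
    have h0 := (hlwspec n hnmem).1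
    rw [hnl'] at h0
    have hmono : 1/((n:ℝ)+1) ≤ 1/((N:ℝ)+1) := by
      apply one_div_le_one_div_of_le (by positivity)
      have : (N:ℝ) ≤ (n:ℝ) := Nat.cast_le.mpr hnN
      linarith
    have := hlt n
    linarith
  · have h1 := (hlwspec n₀ hn₀mem).2
    rw [hn₀l'] at h1
    have := hgt n₀
    linarith

/-- Combined token lemma with an additional shift by `l·a`. -/
lemma tokenAt {a b c t : ℝ} (ha : 0 < a) (hab : a < b) (hbc : b < c)
    (ht : t ∈ Sset a b c) (m l : ℤ) :
    ∃ k : ℕ, (k:ℤ) ≤ ⌊c/b⌋ ∧ t + (m:ℝ) * b + (l:ℝ) * a - (k:ℝ) * b ∈ Sset a b c ∧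
      ((k:ℤ) = ⌊c/b⌋ →
        t + (m:ℝ) * b + (l:ℝ) * a - (k:ℝ) * b ∈
          perSet a (Set.Ico 0 ((c - (⌊c/b⌋:ℝ)*b) + a - b))) := by
  obtain ⟨k, hk1, hk2, hk3⟩ := token ha hab hbc ht m
  refine ⟨k, hk1, ?_, ?_⟩
  · have harg : t + (m:ℝ) * b + (l:ℝ) * a - (k:ℝ) * b
        = (t + (m:ℝ) * b - (k:ℝ) * b) + (l:ℝ) * a := by ring
    rw [harg]
    exact Sset_add_int_a hk2 l
  · intro hkL
    have harg : t + (m:ℝ) * b + (l:ℝ) * a - (k:ℝ) * b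
        = (t + (m:ℝ) * b - (k:ℝ) * b) + (l:ℝ) * a := by ring
    rw [harg]
    exact perSet_add_int_a (hk3 hkL) l

/-- Membership in the covering union from token data. -/
lemma mem_cover {a b c θ : ℝ} (k : ℕ) (hk : (k:ℤ) ≤ ⌊c/b⌋)
    (hS : θ - (k:ℝ)*b ∈ Sset a b c)
    (hper : (k:ℤ) = ⌊c/b⌋ →
      θ - (k:ℝ)*b ∈ perSet a (Set.Ico 0 ((c - (⌊c/b⌋:ℝ)*b) + a - b))) :
    θ ∈ ((fun t => t + (⌊c / b⌋ : ℝ) * b) ''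
        (Sset a b c ∩ perSet a (Set.Ico 0 ((c - (⌊c/b⌋:ℝ)*b) + a - b)))) ∪
      (⋃ (k' : ℕ) (_ : (k' : ℤ) ≤ ⌊c / b⌋ - 1),
        (fun t => t + (k' : ℝ) * b) '' Sset a b c) := by
  by_cases hkL : (k:ℤ) = ⌊c/b⌋
  · left
    refine ⟨θ - (k:ℝ)*b, ⟨hS, hper hkL⟩, ?_⟩
    have hcast : ((k:ℕ):ℝ) = ((⌊c/b⌋ : ℤ):ℝ) := by exact_mod_cast hkL
    simp only
    rw [← hcast]
    ring
  · right
    refine Set.mem_iUnion.mpr ⟨k, Set.mem_iUnion.mpr ⟨by omega, ?_⟩⟩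
    exact ⟨θ - (k:ℝ)*b, hS, by simp only; ring⟩

/-- Theorem `covering2`: with `c₀ = c − ⌊c/b⌋·b`, `c₁ = ⌊c/b⌋·b − ⌊(⌊c/b⌋·b)/a⌋·a`,
`⌊c/b⌋ ≥ 2`, `b − a < c₀ < a`, `0 ≤ c₁ ≤ 2a − b`, if `S_{a,b,c} ≠ ∅` and either `a/b ∉ ℚ` or
`a/b = p/q` (coprime) with `c ∈ (b/q)ℤ`, then
`((S_{a,b,c} ∩ ([0, c₀+a−b) + aℤ)) + ⌊c/b⌋b) ∪ ⋃_{k=0}^{⌊c/b⌋−1} (S_{a,b,c} + kb) = ℝ`. -/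
theorem S_covering (a b c c₀ c₁ : ℝ)
    (ha : 0 < a) (hab : a < b) (hbc : b < c)
    (hc0 : c₀ = c - (⌊c / b⌋ : ℝ) * b)
    (hc1 : c₁ = (⌊c / b⌋ : ℝ) * b - (⌊((⌊c / b⌋ : ℝ) * b) / a⌋ : ℝ) * a)
    (hL : 2 ≤ ⌊c / b⌋) (h1 : b - a < c₀) (h2 : c₀ < a)
    (h3 : 0 ≤ c₁) (h4 : c₁ ≤ 2 * a - b)
    (hS : Sset a b c ≠ ∅)
    (hcase : Irrational (a / b) ∨
      ∃ p q : ℕ, 0 < p ∧ 0 < q ∧ Nat.Coprime p q ∧ a / b = (p : ℝ) / (q : ℝ) ∧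
        ∃ k : ℤ, c = (k : ℝ) * (b / (q : ℝ))) :
    ((fun t => t + (⌊c / b⌋ : ℝ) * b) ''
        (Sset a b c ∩ perSet a (Set.Ico 0 (c₀ + a - b)))) ∪
      (⋃ (k : ℕ) (_ : (k : ℤ) ≤ ⌊c / b⌋ - 1),
        (fun t => t + (k : ℝ) * b) '' Sset a b c) = Set.univ := by
  have hb : 0 < b := ha.trans hab
  have hc0' : c₀ + a - b = (c - (⌊c/b⌋:ℝ)*b) + a - b := by rw [hc0]
  rw [hc0']
  ext θ
  simp only [Set.mem_univ, iff_true]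
  obtain ⟨t₀, ht₀⟩ := Set.nonempty_iff_ne_empty.mpr hS
  rcases hcase with hirr | ⟨p, q, hp, hq, hcop, hav, cz, hcz⟩
  · -- Irrational case: density + limits
    have hdense := dense_ab ha hb hirr
    have hex : ∀ n : ℕ, ∃ m l : ℤ,
        θ < t₀ + (m:ℝ)*b + (l:ℝ)*a ∧ t₀ + (m:ℝ)*b + (l:ℝ)*a < θ + 1/((n:ℝ)+1) := by
      intro n
      have hpos : (0:ℝ) < 1/((n:ℝ)+1) := by positivity
      have hne : (Set.Ioo (θ - t₀) (θ - t₀ + 1/((n:ℝ)+1))).Nonempty :=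
        Set.nonempty_Ioo.mpr (by linarith)
      obtain ⟨x, hx1, hx2⟩ := (dense_iff_inter_open.mp hdense) _ isOpen_Ioo hne
      obtain ⟨m, l, hml⟩ := hx2
      refine ⟨m, l, ?_, ?_⟩
      · have := hx1.1; rw [hml] at this; linarith
      · have := hx1.2; rw [hml] at this; linarith
    choose mf lf hgt hlt using hex
    have htok := fun n => tokenAt ha hab hbc ht₀ (mf n) (lf n)
    choose kf hk1 hk2 hk3 using htok
    set U := Filter.hyperfilter ℕ with hU
    have hbd : {n | (0:ℤ) ≤ (kf n : ℤ) ∧ (kf n : ℤ) ≤ ⌊c/b⌋} ∈ U := by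
      apply Filter.mem_of_superset Filter.univ_mem
      intro n _
      exact ⟨Int.ofNat_nonneg _, hk1 n⟩
    obtain ⟨z, hz⟩ := ultra_fiber U (fun n => (kf n : ℤ)) 0 ⌊c/b⌋ hbd
    obtain ⟨n₀, hn₀⟩ := Ultrafilter.nonempty_of_mem hz
    have hzn : z = (kf n₀ : ℤ) := hn₀.symm
    set K : ℕ := kf n₀ with hKdef
    have hKz : (K:ℤ) = z := hzn.symm
    have hfib : {n | kf n = K} ∈ U := by
      apply Filter.mem_of_superset hz
      intro n hn
      simp only [Set.mem_setOf_eq] at hn ⊢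
      omega
    set s : ℕ → ℝ := fun n => t₀ + (mf n : ℝ)*b + (lf n : ℝ)*a - (K:ℝ)*b with hs
    set sstar : ℝ := θ - (K:ℝ)*b with hsstar
    have hgt' : ∀ n, sstar < s n := fun n => by
      have := hgt n; rw [hs, hsstar]; simp only; linarith
    have hlt' : ∀ n, s n < sstar + 1/((n:ℝ)+1) := fun n => by
      have := hlt n; rw [hs, hsstar]; simp only; linarith
    have hmemS : {n | s n ∈ Sset a b c} ∈ U := by
      apply Filter.mem_of_superset hfib
      intro n hn
      simp only [Set.mem_setOf_eq] at hn ⊢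
      rw [hs]; simp only
      rw [← hn]
      exact hk2 n
    have hSstar : sstar ∈ Sset a b c := limit_S hb hmemS hgt' hlt'
    apply mem_cover K (hk1 n₀) hSstar
    intro hKL
    have hmemP : {n | s n ∈ perSet a (Set.Ico 0 ((c - (⌊c/b⌋:ℝ)*b) + a - b))} ∈ U := by
      apply Filter.mem_of_superset hfib
      intro n hn
      simp only [Set.mem_setOf_eq] at hn ⊢
      rw [hs]; simp only
      have := hk3 n (by rw [hn]; exact hKL)
      rw [hn] at this
      exact this
    exact limit_per ha hmemP hgt' hlt'
  · -- Rational case: cell transfer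
    have hq0 : (0:ℝ) < (q:ℝ) := by exact_mod_cast hq
    have hp0 : (0:ℝ) < (p:ℝ) := by exact_mod_cast hp
    set δ : ℝ := b / q with hδdef
    have hδ : 0 < δ := div_pos hb hq0
    have key : a * (q:ℝ) = (p:ℝ) * b := by
      have h' := hav
      rw [div_eq_div_iff (ne_of_gt hb) (ne_of_gt hq0)] at h'
      linarith [h']
    have hA : a = ((p:ℤ):ℝ) * δ := by
      rw [hδdef]; push_cast
      field_simp
      linarith [key]
    have hB : b = ((q:ℤ):ℝ) * δ := by
      rw [hδdef]; push_cast; field_simp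
    have hC : c = ((cz:ℤ):ℝ) * δ := by rw [hcz, hδdef]
    -- Bezout
    have hgcd : Int.gcd (p:ℤ) (q:ℤ) = 1 := by
      rw [Int.gcd_natCast_natCast]
      exact hcop
    have hbez : (1:ℤ) = (p:ℤ) * Int.gcdA (p:ℤ) (q:ℤ) + (q:ℤ) * Int.gcdB (p:ℤ) (q:ℤ) := by
      have := Int.gcd_eq_gcd_ab (p:ℤ) (q:ℤ)
      rw [hgcd] at this
      exact_mod_cast this
    set n : ℤ := ⌊θ/δ⌋ - ⌊t₀/δ⌋ with hn
    set m : ℤ := n * Int.gcdB (p:ℤ) (q:ℤ) with hm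
    set l : ℤ := n * Int.gcdA (p:ℤ) (q:ℤ) with hl
    have hml : m * (q:ℤ) + l * (p:ℤ) = n := by
      rw [hm, hl]
      linear_combination (-n) * hbez
    set t' : ℝ := t₀ + (m:ℝ)*b + (l:ℝ)*a with ht'
    have hcell : ⌊t'/δ⌋ = ⌊θ/δ⌋ := by
      have harg : t'/δ = t₀/δ + ((m * (q:ℤ) + l * (p:ℤ) : ℤ):ℝ) := by
        rw [ht', hA, hB]
        push_cast
        field_simp
        ring
      rw [harg, Int.floor_add_intCast, hml, hn]
      ring
    obtain ⟨k, hk1, hk2, hk3⟩ := tokenAt ha hab hbc ht₀ m l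
    have hcellk : ⌊(t' - (k:ℝ)*b)/δ⌋ = ⌊(θ - (k:ℝ)*b)/δ⌋ := by
      have harg : ∀ u : ℝ, (u - (k:ℝ)*b)/δ = u/δ + ((-(k*q) : ℤ):ℝ) := by
        intro u
        rw [hB]
        push_cast
        field_simp
        ring
      rw [harg t', harg θ, Int.floor_add_intCast, Int.floor_add_intCast, hcell]
    have hSθ : θ - (k:ℝ)*b ∈ Sset a b c := by
      apply cell_transfer_S hδ (p:ℤ) (q:ℤ) (cz:ℤ) hA hB hC hcellk
      rw [ht']
      exact hk2
    apply mem_cover k hk1 hSθ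
    intro hkL
    have hW : (c - (⌊c/b⌋:ℝ)*b) + a - b = (((cz:ℤ) - ⌊c/b⌋*(q:ℤ) + (p:ℤ) - (q:ℤ) : ℤ):ℝ) * δ := by
      rw [hC, hA, hB]
      push_cast
      ring
    rw [hW]
    apply cell_transfer_per hδ (p:ℤ) _ hA rfl hcellk
    rw [← hW, ht']
    exact hk3 hkL
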